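/- For a cluster of N users in which every cross link exists and every message satisfies T_i ∋ i with H(i,i) ≠ 0 for all i, the greedy algorithm activates user 1 (sets b_{1,1} = 1), and in general the number of delivered messages is at least ⌈N/2⌉. -/

import Mathlib

def FutureConflict (l l' : ℕ × ℕ) : Prop :=
  l.1 < l'.1 ∧
    (l.2 = l'.2 ∨ ((l'.2 = l.1 ∨ l'.2 = l.1 + 1) ∧ (l'.2 + 1 = l'.1 ∨ l'.2 = l'.1)))

def Conflicts (l l' : ℕ × ℕ) : Prop :=
  FutureConflict l l' ∨ FutureConflict l' l ∨ (l.1 = l'.1 ∧ l ≠ l')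

open Classical in
noncomputable def greedy (Ω : Finset (ℕ × ℕ)) : ℕ → Finset (ℕ × ℕ)
  | 0 => ∅
  | i + 1 =>
    let S := greedy Ω i
    if (i + 1, i) ∈ Ω ∧ ∀ l ∈ S, ¬ Conflicts l (i + 1, i) then insert (i + 1, i) S
    else if (i + 1, i + 1) ∈ Ω ∧ ∀ l ∈ S, ¬ Conflicts l (i + 1, i + 1) then
      insert (i + 1, i + 1) S
    else S

open Classical in
noncomputable def linkSet (H : ℕ × ℕ → ℝ) (T : ℕ → Finset ℕ) (N : ℕ) : Finset (ℕ × ℕ) :=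
  (Finset.Icc 1 N ×ˢ Finset.Icc 0 N).filter
    (fun l => (l.2 + 1 = l.1 ∨ l.2 = l.1) ∧ l.2 ∈ T l.1 ∧ H (l.1, l.2) ≠ 0)

lemma greedy_subset_Omega (Ω : Finset (ℕ × ℕ)) : ∀ j, ∀ l ∈ greedy Ω j, l ∈ Ω := by
  intro j
  induction j with
  | zero => simp [greedy]
  | succ i ih =>
    intro l hl
    simp only [greedy] at hl
    split_ifs at hl with h1 h2
    · rcases Finset.mem_insert.mp hl with rfl | h
      · exact h1.1
      · exact ih _ h
    · rcases Finset.mem_insert.mp hl with rfl | h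
      · exact h2.1
      · exact ih _ h
    · exact ih _ hl

lemma greedy_fst_le (Ω : Finset (ℕ × ℕ)) : ∀ j, ∀ l ∈ greedy Ω j, l.1 ≤ j := by
  intro j
  induction j with
  | zero => simp [greedy]
  | succ i ih =>
    intro l hl
    simp only [greedy] at hl
    split_ifs at hl with h1 h2
    · rcases Finset.mem_insert.mp hl with rfl | h
      · simp
      · exact (ih _ h).trans (Nat.le_succ i)
    · rcases Finset.mem_insert.mp hl with rfl | h
      · simp
      · exact (ih _ h).trans (Nat.le_succ i)
    · exact (ih _ hl).trans (Nat.le_succ i)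

lemma greedy_mono (Ω : Finset (ℕ × ℕ)) {i j : ℕ} (hij : i ≤ j) :
    greedy Ω i ⊆ greedy Ω j := by
  induction j, hij using Nat.le_induction with
  | base => exact subset_rfl
  | succ j hj ih =>
    refine ih.trans ?_
    simp only [greedy]
    split_ifs
    · exact Finset.subset_insert _ _
    · exact Finset.subset_insert _ _
    · exact subset_rfl

lemma mem_linkSet {H : ℕ × ℕ → ℝ} {T : ℕ → Finset ℕ} {N : ℕ} {l : ℕ × ℕ} :
    l ∈ linkSet H T N ↔ (1 ≤ l.1 ∧ l.1 ≤ N) ∧ l.2 ≤ N ∧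
      (l.2 + 1 = l.1 ∨ l.2 = l.1) ∧ l.2 ∈ T l.1 ∧ H (l.1, l.2) ≠ 0 := by
  simp [linkSet, Finset.mem_filter, Finset.mem_product, Finset.mem_Icc, and_assoc]

lemma linkSet_snd_le_fst {H : ℕ × ℕ → ℝ} {T : ℕ → Finset ℕ} {N : ℕ} {l : ℕ × ℕ}
    (h : l ∈ linkSet H T N) : l.2 ≤ l.1 := by
  rcases (mem_linkSet.mp h).2.2.1 with h' | h' <;> omega

section Main
variable (N : ℕ) (H : ℕ × ℕ → ℝ) (T : ℕ → Finset ℕ)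

lemma key (hdirect : ∀ i, 1 ≤ i → i ≤ N → H (i, i) ≠ 0)
    (hTi : ∀ i, 1 ≤ i → i ≤ N → i ∈ T i) (i : ℕ) (hi : i + 1 ≤ N)
    (h : ∀ l ∈ greedy (linkSet H T N) i, l.1 ≠ i) :
    ∃ l ∈ greedy (linkSet H T N) (i + 1), l.1 = i + 1 := by
  set Ω := linkSet H T N with hΩ
  by_cases h1 : (i + 1, i) ∈ Ω ∧ ∀ l ∈ greedy Ω i, ¬ Conflicts l (i + 1, i)
  · refine ⟨(i + 1, i), ?_, rfl⟩
    simp only [greedy, if_pos h1]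
    exact Finset.mem_insert_self _ _
  · have h2 : (i + 1, i + 1) ∈ Ω ∧ ∀ l ∈ greedy Ω i, ¬ Conflicts l (i + 1, i + 1) := by
      constructor
      · exact mem_linkSet.mpr ⟨⟨by omega, hi⟩, hi, Or.inr rfl,
          hTi (i + 1) (by omega) hi, hdirect (i + 1) (by omega) hi⟩
      · intro l hl hc
        have hlΩ := greedy_subset_Omega Ω i l hl
        have hle := greedy_fst_le Ω i l hl
        have h2le : l.2 ≤ l.1 := linkSet_snd_le_fst hlΩ
        have hne : l.1 ≠ i := h l hl
        rcases hc with ⟨ha, hb⟩ | ⟨ha, hb⟩ | ⟨ha, hb⟩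
        · simp only at ha hb; omega
        · simp only at ha; omega
        · simp only at ha; omega
    refine ⟨(i + 1, i + 1), ?_, rfl⟩
    simp only [greedy, if_neg h1, if_pos h2]
    exact Finset.mem_insert_self _ _

lemma base (hN : 1 ≤ N) (hdirect : ∀ i, 1 ≤ i → i ≤ N → H (i, i) ≠ 0)
    (hTi : ∀ i, 1 ≤ i → i ≤ N → i ∈ T i) (hno0 : ∀ i, H (i, 0) = 0) :
    (1, 1) ∈ greedy (linkSet H T N) N := by
  set Ω := linkSet H T N with hΩ
  have h0 : (1, 0) ∉ Ω := by
    intro hmem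
    exact (mem_linkSet.mp hmem).2.2.2.2 (hno0 1)
  have h1 : ¬ ((0 + 1, 0) ∈ Ω ∧ ∀ l ∈ (∅ : Finset (ℕ × ℕ)), ¬ Conflicts l (0 + 1, 0)) := by
    intro hmem; exact h0 hmem.1
  have h2 : (0 + 1, 0 + 1) ∈ Ω ∧ ∀ l ∈ (∅ : Finset (ℕ × ℕ)), ¬ Conflicts l (0 + 1, 0 + 1) := by
    constructor
    · exact mem_linkSet.mpr ⟨⟨le_refl 1, hN⟩, hN, Or.inr rfl, hTi 1 le_rfl hN, hdirect 1 le_rfl hN⟩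
    · intro l hl; simp at hl
  have : (1, 1) ∈ greedy Ω 1 := by
    rw [greedy, greedy, if_neg h1, if_pos h2]
    exact Finset.mem_insert_self _ _
  exact greedy_mono Ω hN this

lemma pairclaim (hdirect : ∀ i, 1 ≤ i → i ≤ N → H (i, i) ≠ 0)
    (hTi : ∀ i, 1 ≤ i → i ≤ N → i ∈ T i) (i : ℕ) (hi : i + 1 ≤ N) :
    ∃ l ∈ greedy (linkSet H T N) N, l.1 = i ∨ l.1 = i + 1 := by
  set Ω := linkSet H T N with hΩ
  by_cases hex : ∃ l ∈ greedy Ω N, l.1 = i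
  · obtain ⟨l, hl, h⟩ := hex
    exact ⟨l, hl, Or.inl h⟩
  · push_neg at hex
    have h : ∀ l ∈ greedy Ω i, l.1 ≠ i := fun l hl =>
      hex l (greedy_mono (i := i) (j := N) Ω (Nat.le_of_succ_le hi) hl)
    obtain ⟨l, hl, h'⟩ := key N H T hdirect hTi i hi h
    exact ⟨l, greedy_mono Ω hi hl, Or.inr h'⟩

end Main

theorem stmt13 (N : ℕ) (hN : 1 ≤ N) (H : ℕ × ℕ → ℝ) (T : ℕ → Finset ℕ)
    (hdirect : ∀ i, 1 ≤ i → i ≤ N → H (i, i) ≠ 0)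
    (hTi : ∀ i, 1 ≤ i → i ≤ N → i ∈ T i)
    (hno0 : ∀ i, H (i, 0) = 0) :              -- there is no transmitter `0`
    (1, 1) ∈ greedy (linkSet H T N) N ∧
    (∀ k, 1 ≤ k → 2 * k ≤ N →
      ∃ l ∈ greedy (linkSet H T N) N, l.1 = 2 * k - 1 ∨ l.1 = 2 * k) ∧
    (N + 1) / 2 ≤ (greedy (linkSet H T N) N).card := by
  have h11 := base N H T hN hdirect hTi hno0
  refine ⟨h11, ?_, ?_⟩
  · intro k hk hkN
    obtain ⟨l, hl, h⟩ := pairclaim N H T hdirect hTi (2 * k - 1) (by omega)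
    exact ⟨l, hl, by omega⟩
  · set G := greedy (linkSet H T N) N with hG
    have hmap : Finset.range ((N - 1) / 2 + 1) ⊆ (G.image Prod.fst).image (· / 2) := by
      intro k hk
      simp only [Finset.mem_range] at hk
      rcases Nat.eq_zero_or_pos k with rfl | hk1
      · exact Finset.mem_image.mpr ⟨1, Finset.mem_image.mpr ⟨(1, 1), h11, rfl⟩, rfl⟩
      · obtain ⟨l, hl, h⟩ := pairclaim N H T hdirect hTi (2 * k) (by omega)
        exact Finset.mem_image.mpr ⟨l.1, Finset.mem_image.mpr ⟨l, hl, rfl⟩, by omega⟩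
    calc (N + 1) / 2 ≤ (N - 1) / 2 + 1 := by omega
      _ = (Finset.range ((N - 1) / 2 + 1)).card := (Finset.card_range _).symm
      _ ≤ ((G.image Prod.fst).image (· / 2)).card := Finset.card_le_card hmap
      _ ≤ (G.image Prod.fst).card := Finset.card_image_le
      _ ≤ G.card := Finset.card_image_le
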